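/- Let α > 0 be an irrational real number. Consider the subsets αℤ = { α·k : k ∈ ℤ } and ℤ of the real line, each with the metric induced from ℝ. Then every map f : αℤ → ℤ has distortion dis f = sup{ | |x − x'| − |f(x) − f(x')| | : x, x' ∈ αℤ } ≥ 1/2. Consequently, every correspondence R between αℤ and ℤ has dis R ≥ 1/2, and hence d_GH(αℤ, ℤ) ≥ 1/4. -/
import Mathlib


open ENNReal

/-- A correspondence between `X` and `Y`: both projections are surjective. -/
def IsCorrespondence {X Y : Type*} (R : Set (X × Y)) : Prop :=
  (∀ x : X, ∃ y : Y, (x, y) ∈ R) ∧ (∀ y : Y, ∃ x : X, (x, y) ∈ R)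

/-- The distortion of a correspondence, in `[0,∞]`. -/
noncomputable def corDis {X Y : Type*} [MetricSpace X] [MetricSpace Y]
    (R : Set (X × Y)) : ℝ≥0∞ :=
  ⨆ p ∈ R, ⨆ q ∈ R, ENNReal.ofReal |dist p.1 q.1 - dist p.2 q.2|

/-- The Gromov–Hausdorff distance of arbitrary metric spaces, in `[0,∞]`. -/
noncomputable def ghDist (X Y : Type*) [MetricSpace X] [MetricSpace Y] : ℝ≥0∞ :=
  (1 / 2) * ⨅ R : {R : Set (X × Y) // IsCorrespondence R}, corDis R.1

/-- The distortion of a (not necessarily continuous) map, in . -/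
noncomputable def mapDis {X Y : Type*} [MetricSpace X] [MetricSpace Y] (f : X → Y) : ℝ≥0∞ :=
  ⨆ x : X, ⨆ x' : X, ENNReal.ofReal |dist x x' - dist (f x) (f x')|

/-- The set αℤ = { α·k : k ∈ ℤ } inside the real line. -/
def alphaZ (α : ℝ) : Set ℝ := Set.range fun k : ℤ => α * (k : ℝ)

/-- The set ℤ inside the real line. -/
def intZ : Set ℝ := Set.range fun k : ℤ => (k : ℝ)

/-- For irrational α > 0, every map αℤ → ℤ has distortion at least 1/2, every
correspondence between αℤ and ℤ has distortion at least 1/2, and hence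
the Gromov–Hausdorff distance between αℤ and ℤ is at least 1/4. -/
-- key density lemma
lemma key_dense (α : ℝ) (hirr : Irrational α) :
    ∀ ε : ℝ, 0 < ε → ∃ n : ℤ, ∀ N : ℤ, (1:ℝ)/2 - ε ≤ |α * n - N| := by
  intro ε hε
  have hdense : Dense ((AddSubgroup.closure ({1, α} : Set ℝ) : AddSubgroup ℝ) : Set ℝ) := by
    rcases AddSubgroup.dense_or_cyclic (AddSubgroup.closure ({1, α} : Set ℝ)) with h | ⟨a, ha⟩
    · exact h
    · exfalso
      have h1 : (1:ℝ) ∈ AddSubgroup.closure ({1, α} : Set ℝ) :=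
        AddSubgroup.subset_closure (by simp)
      have h2 : α ∈ AddSubgroup.closure ({1, α} : Set ℝ) :=
        AddSubgroup.subset_closure (by simp)
      rw [ha, AddSubgroup.mem_closure_singleton] at h1 h2
      obtain ⟨m, hm⟩ := h1
      obtain ⟨n, hn⟩ := h2
      have hm0 : (m:ℝ) ≠ 0 := by
        intro h
        rw [zsmul_eq_mul, h, zero_mul] at hm
        exact one_ne_zero hm.symm
      apply hirr
      refine ⟨(n : ℚ) / m, ?_⟩
      rw [zsmul_eq_mul] at hm hn
      have ha' : a = 1 / m := by field_simp at hm ⊢; linarith [hm]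
      rw [← hn, ha']
      push_cast
      ring
  obtain ⟨s, hs2, hs1⟩ := Metric.dense_iff.mp hdense (1/2) ε hε
  rw [SetLike.mem_coe, AddSubgroup.mem_closure_pair] at hs1
  obtain ⟨m, n, hmn⟩ := hs1
  refine ⟨n, fun N => ?_⟩
  rw [zsmul_eq_mul, zsmul_eq_mul, mul_one] at hmn
  rw [Metric.mem_ball, Real.dist_eq] at hs2
  -- s = m + n*α, |s - 1/2| < ε
  have h1 : |α * n - ((1:ℝ)/2 - m)| < ε := by
    rw [show α * n - ((1:ℝ)/2 - m) = s - 1/2 by rw [← hmn]; ring]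
    exact hs2
  have h2 : (1:ℝ)/2 ≤ |(1:ℝ)/2 - m - N| := by
    rcases le_or_gt ((m:ℝ) + N) 0 with h | h
    · rw [abs_of_pos (by linarith)]; linarith
    · have h' : (0:ℤ) < m + N := by exact_mod_cast h
      have : (1:ℝ) ≤ (m:ℝ) + N := by exact_mod_cast h'
      rw [abs_of_neg (by linarith), neg_sub]
      ring_nf
      linarith
  calc (1:ℝ)/2 - ε ≤ |(1:ℝ)/2 - m - N| - |α * n - ((1:ℝ)/2 - m)| := by linarith
    _ ≤ |α * n - N| := by
        have h4 := abs_sub_abs_le_abs_sub ((1:ℝ)/2 - m - N) ((1:ℝ)/2 - m - α*n)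
        have e1 : ((1:ℝ)/2 - m - N) - ((1:ℝ)/2 - m - α*n) = α*n - N := by ring
        rw [e1] at h4
        have e2 := abs_sub_comm ((1:ℝ)/2 - (m:ℝ)) (α*(n:ℝ))
        have e3 : (1:ℝ)/2 - (m:ℝ) - α*(n:ℝ) = ((1:ℝ)/2 - (m:ℝ)) - α*(n:ℝ) := by ring
        rw [e3] at h4
        linarith [h4, e2]

lemma ofReal_half : ENNReal.ofReal (1/2) = 1/2 := by
  rw [ENNReal.ofReal_div_of_pos (by norm_num), ENNReal.ofReal_one, ENNReal.ofReal_ofNat]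

lemma quarter_eq : (1:ℝ≥0∞)/4 = 1/2 * (1/2) := by
  rw [one_div, one_div, ← ENNReal.mul_inv (by norm_num) (by norm_num)]
  norm_num

set_option maxHeartbeats 1000000 in
theorem distortion_alphaZ_intZ (α : ℝ) (hα : 0 < α) (hirr : Irrational α) :
    (∀ f : ↥(alphaZ α) → ↥intZ, (1 : ℝ≥0∞) / 2 ≤ mapDis f) ∧
    (∀ R : Set (↥(alphaZ α) × ↥intZ), IsCorrespondence R → (1 : ℝ≥0∞) / 2 ≤ corDis R) ∧
    (1 : ℝ≥0∞) / 4 ≤ ghDist ↥(alphaZ α) ↥intZ := by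
  have hmap : ∀ f : ↥(alphaZ α) → ↥intZ, (1 : ℝ≥0∞) / 2 ≤ mapDis f := by
    intro f
    refine ENNReal.le_of_forall_pos_le_add fun ε hε _ => ?_
    obtain ⟨n, hn⟩ := key_dense α hirr ε (by exact_mod_cast hε)
    set x : ↥(alphaZ α) := ⟨α * n, ⟨n, rfl⟩⟩ with hx
    set x0 : ↥(alphaZ α) := ⟨0, ⟨0, by simp⟩⟩ with hx0
    obtain ⟨a, ha⟩ := (f x).2
    obtain ⟨b, hb⟩ := (f x0).2
    have hd1 : dist x x0 = |α * n| := by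
      rw [Subtype.dist_eq, Real.dist_eq]; simp [hx, hx0]
    have hd2 : dist (f x) (f x0) = ((|a - b| : ℤ) : ℝ) := by
      rw [Subtype.dist_eq, Real.dist_eq, ← ha, ← hb]
      push_cast [Int.cast_abs]
      rfl
    set M : ℤ := |a - b| with hM
    have hkey : (1:ℝ)/2 - ε ≤ |dist x x0 - dist (f x) (f x0)| := by
      rw [hd1, hd2]
      rcases le_or_gt 0 (α * n) with h | h
      · rw [abs_of_nonneg h]; exact hn M
      · rw [abs_of_neg h,
          show -(α * n) - ((M:ℤ):ℝ) = -(α * n - ((-M : ℤ) : ℝ)) by push_cast; ring, abs_neg]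
        exact hn (-M)
    have hle : ENNReal.ofReal ((1:ℝ)/2 - ε) ≤ mapDis f := by
      calc ENNReal.ofReal ((1:ℝ)/2 - ε)
          ≤ ENNReal.ofReal |dist x x0 - dist (f x) (f x0)| := ENNReal.ofReal_le_ofReal
            (le_trans hkey (le_refl _))
        _ ≤ ⨆ x' : ↥(alphaZ α), ENNReal.ofReal |dist x x' - dist (f x) (f x')| :=
            le_iSup (fun x' => ENNReal.ofReal |dist x x' - dist (f x) (f x')|) x0
        _ ≤ mapDis f := le_iSup (fun y => ⨆ x' : ↥(alphaZ α),
            ENNReal.ofReal |dist y x' - dist (f y) (f x')|) x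
    calc (1:ℝ≥0∞)/2 = ENNReal.ofReal (1/2) := ofReal_half.symm
      _ = ENNReal.ofReal (((1:ℝ)/2 - ε) + ε) := by ring_nf
      _ ≤ ENNReal.ofReal ((1:ℝ)/2 - ε) + ENNReal.ofReal ε := ENNReal.ofReal_add_le
      _ ≤ mapDis f + ε := add_le_add hle (by rw [ENNReal.ofReal_coe_nnreal])
  have hcor : ∀ R : Set (↥(alphaZ α) × ↥intZ), IsCorrespondence R → (1 : ℝ≥0∞) / 2 ≤ corDis R := by
    intro R hR
    choose g hg using hR.1
    refine le_trans (hmap g) ?_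
    refine iSup_le fun x => iSup_le fun x' => ?_
    exact le_iSup₂_of_le (x, g x) (hg x) (le_iSup₂_of_le (x', g x') (hg x') le_rfl)
  refine ⟨hmap, hcor, ?_⟩
  rw [ghDist, quarter_eq]
  exact mul_le_mul_right (le_iInf fun (R : {R : Set (↥(alphaZ α) × ↥intZ) // IsCorrespondence R}) => hcor R.1 R.2) _
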